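/- Let q ≥ 2 be a natural number. The star graph K_{1,q} is determined by its adjacency spectrum if and only if q is a prime number. -/

import Mathlib

open Polynomial

instance completeBipartiteGraph.decidableRelAdj {V W : Type*} :
    DecidableRel (completeBipartiteGraph V W).Adj := fun v w => by
  cases v <;> cases w <;> simp [completeBipartiteGraph] <;> infer_instance

namespace StarDS

open Matrix Finset

variable {V : Type} [Fintype V] [DecidableEq V]

lemma eval_charpoly' (M : Matrix V V ℝ) (x : ℝ) :
    M.charpoly.eval x = (x • (1 : Matrix V V ℝ) - M).det := by
  rw [Matrix.charpoly, ← Polynomial.coe_evalRingHom, RingHom.map_det]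
  congr 1
  ext i j
  by_cases h : i = j <;>
    simp [h, charmatrix_apply_eq, charmatrix_apply_ne, Matrix.one_apply]

/-- The "pattern" graph: complete bipartite between `S` and `T`, everything else isolated. -/
def patGraph (S T : Finset V) (hd : Disjoint S T) : SimpleGraph V where
  Adj v w := (v ∈ S ∧ w ∈ T) ∨ (v ∈ T ∧ w ∈ S)
  symm := ⟨by intro v w h; tauto⟩
  loopless := ⟨by
    intro v h
    rcases h with ⟨h1, h2⟩ | ⟨h1, h2⟩
    · exact Finset.disjoint_left.mp hd h1 h2
    · exact Finset.disjoint_left.mp hd h2 h1⟩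

instance patGraph.adjDecidable (S T : Finset V) (hd : Disjoint S T) :
    DecidableRel (patGraph S T hd).Adj := fun v w =>
  inferInstanceAs (Decidable ((v ∈ S ∧ w ∈ T) ∨ (v ∈ T ∧ w ∈ S)))

omit [Fintype V] in
lemma patGraph_adjMatrix (S T : Finset V) (hd : Disjoint S T) (v w : V) :
    (patGraph S T hd).adjMatrix ℝ v w
      = (if v ∈ S then 1 else 0) * (if w ∈ T then 1 else 0)
        + (if v ∈ T then 1 else 0) * (if w ∈ S then 1 else 0) := by
  rw [SimpleGraph.adjMatrix_apply]
  have hST : ∀ z : V, z ∈ S → z ∈ T → False :=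
    fun z hz hz' => Finset.disjoint_left.mp hd hz hz'
  by_cases hvS : v ∈ S <;> by_cases hvT : v ∈ T <;>
    by_cases hwS : w ∈ S <;> by_cases hwT : w ∈ T <;>
    simp_all [patGraph]

lemma sum_ite_ite_mul (A B : Finset V) (c d : ℝ) :
    ∑ v, (if v ∈ A then c else 0) * (if v ∈ B then d else 0)
      = (A ∩ B).card * (c * d) := by
  have : ∀ v : V, (if v ∈ A then c else 0) * (if v ∈ B then d else 0)
      = if v ∈ A ∩ B then c * d else 0 := by
    intro v
    by_cases hA : v ∈ A <;> by_cases hB : v ∈ B <;> simp [hA, hB]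
  rw [Finset.sum_congr rfl fun v _ => this v]
  rw [Finset.sum_ite_mem, Finset.univ_inter, Finset.sum_const, nsmul_eq_mul]

lemma patGraph_charpoly (S T : Finset V) (hd : Disjoint S T) (h2 : 2 ≤ Fintype.card V) :
    ((patGraph S T hd).adjMatrix ℝ).charpoly
      = X ^ (Fintype.card V) - C ((S.card : ℝ) * T.card) * X ^ (Fintype.card V - 2) := by
  apply Polynomial.eq_of_infinite_eval_eq
  apply Set.Infinite.mono (s := {(0:ℝ)}ᶜ)
  swap
  · exact (Set.finite_singleton 0).infinite_compl
  intro x hx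
  have hx0 : x ≠ 0 := hx
  simp only [Set.mem_setOf_eq]
  rw [eval_charpoly']
  set n := Fintype.card V
  set U : Matrix V (Fin 2) ℝ := fun v i =>
    if i = 0 then (if v ∈ S then 1 else 0) else (if v ∈ T then 1 else 0) with hU
  set W : Matrix (Fin 2) V ℝ := fun i w =>
    if i = 0 then (if w ∈ T then -x⁻¹ else 0) else (if w ∈ S then -x⁻¹ else 0) with hW
  have hST : ∀ z : V, z ∈ S → z ∈ T → False :=
    fun z hz hz' => Finset.disjoint_left.mp hd hz hz'
  have hUW : U * W = (-x⁻¹) • (patGraph S T hd).adjMatrix ℝ := by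
    ext v w
    rw [Matrix.mul_apply, Fin.sum_univ_two, Matrix.smul_apply,
      patGraph_adjMatrix S T hd v w]
    simp only [hU, hW]
    by_cases hvS : v ∈ S <;> by_cases hvT : v ∈ T <;>
      by_cases hwS : w ∈ S <;> by_cases hwT : w ∈ T <;>
      simp_all <;> ring
  have key : x • (1 : Matrix V V ℝ) - (patGraph S T hd).adjMatrix ℝ
      = x • ((1 : Matrix V V ℝ) + U * W) := by
    rw [hUW, smul_add, smul_smul, mul_neg, mul_inv_cancel₀ hx0, neg_one_smul,
      sub_eq_add_neg]
  rw [key, Matrix.det_smul, Matrix.det_one_add_mul_comm]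
  have e00 : ∑ v, W 0 v * U v 0 = 0 := by
    have h : ∀ v, W 0 v * U v 0
        = (if v ∈ T then -x⁻¹ else 0) * (if v ∈ S then 1 else 0) := fun v => by
      simp [hU, hW]
    rw [Finset.sum_congr rfl fun v _ => h v, sum_ite_ite_mul,
      Finset.disjoint_iff_inter_eq_empty.mp hd.symm]
    simp
  have e01 : ∑ v, W 0 v * U v 1 = -x⁻¹ * T.card := by
    have h : ∀ v, W 0 v * U v 1
        = (if v ∈ T then -x⁻¹ else 0) * (if v ∈ T then 1 else 0) := fun v => by
      simp [hU, hW]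
    rw [Finset.sum_congr rfl fun v _ => h v, sum_ite_ite_mul, Finset.inter_self]
    ring
  have e10 : ∑ v, W 1 v * U v 0 = -x⁻¹ * S.card := by
    have h : ∀ v, W 1 v * U v 0
        = (if v ∈ S then -x⁻¹ else 0) * (if v ∈ S then 1 else 0) := fun v => by
      simp [hU, hW]
    rw [Finset.sum_congr rfl fun v _ => h v, sum_ite_ite_mul, Finset.inter_self]
    ring
  have e11 : ∑ v, W 1 v * U v 1 = 0 := by
    have h : ∀ v, W 1 v * U v 1
        = (if v ∈ S then -x⁻¹ else 0) * (if v ∈ T then 1 else 0) := fun v => by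
      simp [hU, hW]
    rw [Finset.sum_congr rfl fun v _ => h v, sum_ite_ite_mul,
      Finset.disjoint_iff_inter_eq_empty.mp hd]
    simp
  have hWU : (1 : Matrix (Fin 2) (Fin 2) ℝ) + W * U
      = !![1, -x⁻¹ * T.card; -x⁻¹ * S.card, 1] := by
    ext i j
    rw [Matrix.add_apply, Matrix.mul_apply]
    fin_cases i <;> fin_cases j <;>
      simp [Matrix.one_apply, Fin.zero_eta, Fin.mk_one, e00, e01, e10, e11]
  rw [hWU, Matrix.det_fin_two_of]
  have hxn : (x:ℝ) ^ n = x ^ (n - 2) * x ^ 2 := by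
    rw [← pow_add, Nat.sub_add_cancel h2]
  rw [eval_sub, eval_mul, eval_pow, eval_pow, eval_X, eval_C, hxn]
  field_simp

lemma charpoly_conj (P Pinv M : Matrix V V ℝ) (h1 : P * Pinv = 1) (h2 : Pinv * P = 1) :
    (P * M * Pinv).charpoly = M.charpoly := by
  have hmap1 : P.map C * Pinv.map C = 1 := by
    rw [← Matrix.map_mul, h1, Matrix.map_one _ (map_zero C) (map_one C)]
  have hmap2 : Pinv.map C * P.map C = 1 := by
    rw [← Matrix.map_mul, h2, Matrix.map_one _ (map_zero C) (map_one C)]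
  have hchar : charmatrix (P * M * Pinv) = P.map C * charmatrix M * Pinv.map C := by
    unfold charmatrix
    rw [Matrix.mul_sub, Matrix.sub_mul]
    congr 1
    · rw [Matrix.scalar_apply, ← Matrix.smul_one_eq_diagonal, Matrix.mul_smul, Matrix.mul_one,
        Matrix.smul_mul, hmap1]
    · simp only [RingHom.mapMatrix_apply]
      rw [← Matrix.map_mul, ← Matrix.map_mul]
  rw [Matrix.charpoly, Matrix.charpoly, hchar, det_mul, det_mul, mul_comm, ← mul_assoc,
    ← det_mul, hmap2, det_one, one_mul]

lemma charpoly_diagonal (d : V → ℝ) :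
    (Matrix.diagonal d).charpoly = ∏ i, (X - C (d i)) := by
  have : charmatrix (Matrix.diagonal d) = Matrix.diagonal fun i => X - C (d i) := by
    ext i j
    by_cases h : i = j <;>
      simp [h, charmatrix_apply_eq, charmatrix_apply_ne, Matrix.diagonal_apply]
  rw [Matrix.charpoly, this, Matrix.det_diagonal]

lemma hermitian_charpoly_eq {A : Matrix V V ℝ} (hA : A.IsHermitian) :
    A.charpoly = ∏ i, (X - C (hA.eigenvalues i)) := by
  have hdiag : (Matrix.diagonal (RCLike.ofReal ∘ hA.eigenvalues) : Matrix V V ℝ)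
      = Matrix.diagonal hA.eigenvalues := by
    congr 1
  have h1 : (hA.eigenvectorUnitary : Matrix V V ℝ)
      * star (hA.eigenvectorUnitary : Matrix V V ℝ) = 1 :=
    (Unitary.mem_iff.mp hA.eigenvectorUnitary.2).2
  have h2 : star (hA.eigenvectorUnitary : Matrix V V ℝ)
      * (hA.eigenvectorUnitary : Matrix V V ℝ) = 1 :=
    (Unitary.mem_iff.mp hA.eigenvectorUnitary.2).1
  conv_lhs => rw [hA.spectral_theorem]
  rw [Unitary.conjStarAlgAut_apply, hdiag, charpoly_conj _ _ _ h1 h2, charpoly_diagonal]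

lemma hermitian_rank_eq {A : Matrix V V ℝ} (hA : A.IsHermitian) :
    A.rank = Fintype.card V - A.charpoly.rootMultiplicity 0 := by
  rw [hA.rank_eq_card_non_zero_eigs]
  have hroots : A.charpoly.roots = Multiset.map hA.eigenvalues Finset.univ.val := by
    rw [hermitian_charpoly_eq hA,
      ← Polynomial.roots_multiset_prod_X_sub_C (Multiset.map hA.eigenvalues Finset.univ.val),
      Multiset.map_map]
    rfl
  have hcount : A.charpoly.rootMultiplicity 0
      = (Finset.univ.filter fun i => hA.eigenvalues i = 0).card := by
    rw [← Polynomial.count_roots, hroots, Multiset.count_map]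
    congr 1
    rw [Finset.filter_val]
    exact Multiset.filter_congr fun i _ => eq_comm
  rw [hcount, Fintype.card_subtype]
  have := Finset.card_filter_add_card_filter_not
    (s := (Finset.univ : Finset V)) (p := fun i => hA.eigenvalues i = 0)
  simp only [Finset.card_univ] at this
  simp only [ne_eq]
  omega

omit [Fintype V] [DecidableEq V] in
lemma adj_iff_aux (G : SimpleGraph V) [DecidableRel G.Adj] (u v x y : V)
    (hk : (if G.Adj x y then (1:ℝ) else 0)
      = (if G.Adj v y then (1:ℝ) else 0) * (if G.Adj x u then (1:ℝ) else 0)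
        + (if G.Adj u y then (1:ℝ) else 0) * (if G.Adj x v then (1:ℝ) else 0))
    (hb1 : ¬(G.Adj u y ∧ G.Adj v y)) (hb2 : ¬(G.Adj u x ∧ G.Adj v x))
    (hs1 : G.Adj x u ↔ G.Adj u x) (hs2 : G.Adj x v ↔ G.Adj v x) :
    G.Adj x y ↔ ((G.Adj x v ∧ G.Adj u y) ∨ (G.Adj x u ∧ G.Adj v y)) := by
  by_cases h1 : G.Adj v y <;> by_cases h2 : G.Adj x u <;>
    by_cases h3 : G.Adj u y <;> by_cases h4 : G.Adj x v <;>
    by_cases h5 : G.Adj x y <;>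
    simp only [h1, h2, h3, h4, h5, if_true, if_false, iff_true, iff_false,
      and_true, and_false, true_and, false_and, or_false, false_or, or_self,
      not_false_iff, not_true] at hk hb1 hb2 hs1 hs2 ⊢ <;>
    first
      | rfl
      | trivial
      | tauto
      | norm_num at hk

lemma rank_two_structure (G : SimpleGraph V) [DecidableRel G.Adj]
    (h2 : (G.adjMatrix ℝ).rank = 2) :
    ∃ (S T : Finset V) (hd : Disjoint S T), S.Nonempty ∧ T.Nonempty ∧ G = patGraph S T hd := by
  set A := G.adjMatrix ℝ with hA
  have hA0 : A ≠ 0 := by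
    intro h
    rw [h, Matrix.rank_zero] at h2
    norm_num at h2
  obtain ⟨u, v, huv⟩ : ∃ u v, G.Adj u v := by
    by_contra hc
    push_neg at hc
    apply hA0
    ext x y
    simp [hA, hc]
  set c : V → (V → ℝ) := fun w x => A x w with hc
  have hmem : ∀ w, c w ∈ LinearMap.range A.mulVecLin := by
    intro w
    exact ⟨Pi.single w 1, by ext x; simp [Matrix.mulVecLin_apply, hc]⟩
  have hli : LinearIndependent ℝ ![c u, c v] := by
    rw [LinearIndependent.pair_iff]
    intro s t hst
    have h1 := congrFun hst v
    have h2 := congrFun hst u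
    simp only [Pi.add_apply, Pi.smul_apply, Pi.zero_apply, smul_eq_mul, hc, hA,
      SimpleGraph.adjMatrix_apply] at h1 h2
    rw [if_pos huv.symm, if_neg G.irrefl] at h1
    rw [if_neg G.irrefl, if_pos huv] at h2
    constructor <;> linarith
  have hspan : Submodule.span ℝ {c u, c v} = LinearMap.range A.mulVecLin := by
    have hr : Set.range ![c u, c v] = {c u, c v} := by
      ext z
      simp [Fin.exists_fin_two, or_comm]
    apply Submodule.eq_of_le_of_finrank_eq
    · rw [Submodule.span_le]
      rintro z hz
      rcases hz with rfl | hz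
      · exact hmem u
      · rw [Set.mem_singleton_iff] at hz; subst hz; exact hmem v
    · rw [← hr, finrank_span_eq_card hli]
      have : A.rank = Module.finrank ℝ (LinearMap.range A.mulVecLin) := rfl
      rw [← this, h2]
      simp
  have key : ∀ x w, A x w = A v w * A x u + A u w * A x v := by
    intro x w
    obtain ⟨a, b, hab⟩ := Submodule.mem_span_pair.mp (hspan ▸ hmem w)
    have hv := congrFun hab v
    have hu := congrFun hab u
    have hx := congrFun hab x
    simp only [Pi.add_apply, Pi.smul_apply, smul_eq_mul, hc] at hv hu hx
    have hAvu : A v u = 1 := by simp [hA, huv.symm]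
    have hAuv : A u v = 1 := by simp [hA, huv]
    have hAvv : A v v = 0 := by simp [hA]
    have hAuu : A u u = 0 := by simp [hA]
    rw [hAvu, hAvv, mul_one, mul_zero, add_zero] at hv
    rw [hAuu, hAuv, mul_zero, mul_one, zero_add] at hu
    rw [← hx, hv, hu]
  have hzero : ∀ w, A u w * A v w = 0 := by
    intro w
    have hk := key w w
    have hAww : A w w = 0 := by simp [hA]
    have hs1 : A w u = A u w := by simp [hA, SimpleGraph.adj_comm]
    have hs2 : A w v = A v w := by simp [hA, SimpleGraph.adj_comm]
    rw [hAww, hs1, hs2] at hk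
    nlinarith [hk]
  have hnotboth : ∀ z, ¬(G.Adj u z ∧ G.Adj v z) := by
    intro z hz
    have := hzero z
    simp [hA, hz.1, hz.2] at this
  have hiff : ∀ x y, G.Adj x y ↔ ((G.Adj x v ∧ G.Adj u y) ∨ (G.Adj x u ∧ G.Adj v y)) := by
    intro x y
    have hk := key x y
    simp only [hA, SimpleGraph.adjMatrix_apply] at hk
    exact adj_iff_aux G u v x y hk (hnotboth y) (hnotboth x)
      (SimpleGraph.adj_comm _ _ _) (SimpleGraph.adj_comm _ _ _)
  refine ⟨Finset.univ.filter (fun z => G.Adj z v), Finset.univ.filter (fun z => G.Adj z u),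
    ?_, ⟨u, by simp [huv]⟩, ⟨v, by simp [huv.symm]⟩, ?_⟩
  · rw [Finset.disjoint_left]
    intro z hz1 hz2
    simp only [Finset.mem_filter] at hz1 hz2
    exact hnotboth z ⟨hz2.2.symm, hz1.2.symm⟩
  · ext x y
    rw [hiff x y]
    simp only [patGraph, Finset.mem_filter, Finset.mem_univ, true_and]
    constructor
    · rintro (⟨ha, hb⟩ | ⟨ha, hb⟩)
      · exact Or.inl ⟨ha, hb.symm⟩
      · exact Or.inr ⟨ha, hb.symm⟩
    · rintro (⟨ha, hb⟩ | ⟨ha, hb⟩)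
      · exact Or.inl ⟨ha, hb.symm⟩
      · exact Or.inr ⟨ha, hb.symm⟩

lemma patGraph_degree_of_mem_S {S T : Finset V} {hd : Disjoint S T} {v : V} (hv : v ∈ S) :
    (patGraph S T hd).degree v = T.card := by
  rw [← SimpleGraph.card_neighborFinset_eq_degree]
  congr 1
  ext w
  have hvT : v ∉ T := Finset.disjoint_left.mp hd hv
  simp only [SimpleGraph.mem_neighborFinset]
  simp [SimpleGraph.mem_neighborFinset, patGraph, hv, hvT]

omit [Fintype V] in
lemma patGraph_comm (S T : Finset V) (hd : Disjoint S T) :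
    patGraph T S hd.symm = patGraph S T hd := by
  ext x y
  simp only [patGraph]
  tauto

lemma patGraph_degree_of_mem_T {S T : Finset V} {hd : Disjoint S T} {v : V} (hv : v ∈ T) :
    (patGraph S T hd).degree v = S.card := by
  rw [← SimpleGraph.card_neighborFinset_eq_degree]
  congr 1
  ext w
  have hvS : v ∉ S := Finset.disjoint_right.mp hd hv
  simp only [SimpleGraph.mem_neighborFinset]
  simp [SimpleGraph.mem_neighborFinset, patGraph, hv, hvS]

lemma patGraph_degree_of_not_mem {S T : Finset V} {hd : Disjoint S T} {v : V}
    (hvS : v ∉ S) (hvT : v ∉ T) :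
    (patGraph S T hd).degree v = 0 := by
  rw [← SimpleGraph.card_neighborFinset_eq_degree, Finset.card_eq_zero]
  ext w
  simp only [SimpleGraph.mem_neighborFinset]
  simp [SimpleGraph.mem_neighborFinset, patGraph, hvS, hvT]

omit [DecidableEq V] in
lemma iso_degree {W : Type} [Fintype W] [DecidableEq W] {G : SimpleGraph V}
    {G' : SimpleGraph W} [DecidableRel G.Adj] [DecidableRel G'.Adj]
    (φ : G ≃g G') (v : V) : G.degree v = G'.degree (φ v) := by
  rw [← SimpleGraph.card_neighborSet_eq_degree, ← SimpleGraph.card_neighborSet_eq_degree]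
  exact Fintype.card_congr (φ.mapNeighborSet v)

/-- the left/right finsets in a sum type -/
def sumLeft (α β : Type*) [Fintype α] [Fintype β] [DecidableEq α] [DecidableEq β] :
    Finset (α ⊕ β) := Finset.univ.filter (·.isLeft)

def sumRight (α β : Type*) [Fintype α] [Fintype β] [DecidableEq α] [DecidableEq β] :
    Finset (α ⊕ β) := Finset.univ.filter (·.isRight)

variable {α β : Type} [Fintype α] [Fintype β] [DecidableEq α] [DecidableEq β]

lemma sumLeft_card : (sumLeft α β).card = Fintype.card α := by
  rw [sumLeft, ← Fintype.card_coe]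
  apply Fintype.card_congr
  refine ⟨fun x => Sum.getLeft x.1 ((Finset.mem_filter.mp x.2).2),
    fun a => ⟨Sum.inl a, by simp⟩, ?_, ?_⟩
  · rintro ⟨(a | b), h⟩
    · simp
    · simp [Finset.mem_filter] at h
  · intro a; simp

lemma sumRight_card : (sumRight α β).card = Fintype.card β := by
  rw [sumRight, ← Fintype.card_coe]
  apply Fintype.card_congr
  refine ⟨fun x => Sum.getRight x.1 ((Finset.mem_filter.mp x.2).2),
    fun b => ⟨Sum.inr b, by simp⟩, ?_, ?_⟩
  · rintro ⟨(a | b), h⟩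
    · simp [Finset.mem_filter] at h
    · simp
  · intro b; simp

lemma sum_disjoint : Disjoint (sumLeft α β) (sumRight α β) := by
  rw [Finset.disjoint_left]
  rintro (a | b) h1 h2 <;> simp [sumLeft, sumRight, Finset.mem_filter] at h1 h2

lemma sum_union : sumLeft α β ∪ sumRight α β = Finset.univ := by
  ext (a | b) <;> simp [sumLeft, sumRight]

lemma completeBipartiteGraph_eq_patGraph :
    completeBipartiteGraph α β = patGraph (sumLeft α β) (sumRight α β) sum_disjoint := by
  ext x y
  cases x <;> cases y <;>
    simp [completeBipartiteGraph, patGraph, sumLeft, sumRight]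

/-- Build an isomorphism between two pattern graphs with matching part sizes,
provided the parts cover everything. -/
lemma patGraph_iso_of_cards {W : Type} [Fintype W] [DecidableEq W]
    (S T : Finset V) (hd : Disjoint S T) (S' T' : Finset W) (hd' : Disjoint S' T')
    (hS : S.card = S'.card) (hT : T.card = T'.card)
    (hV : S ∪ T = Finset.univ) (hW : S' ∪ T' = Finset.univ) :
    Nonempty (patGraph S T hd ≃g patGraph S' T' hd') := by
  have toSum_bij : Function.Bijective (Sum.elim Subtype.val Subtype.val :
      (↥S ⊕ ↥T) → V) := by
    constructor
    · rintro (⟨a, ha⟩ | ⟨a, ha⟩) (⟨b, hb⟩ | ⟨b, hb⟩) h <;> simp at h <;> subst h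
      · rfl
      · exact (Finset.disjoint_left.mp hd ha hb).elim
      · exact (Finset.disjoint_left.mp hd hb ha).elim
      · rfl
    · intro x
      have : x ∈ S ∪ T := hV ▸ Finset.mem_univ x
      rcases Finset.mem_union.mp this with h | h
      · exact ⟨Sum.inl ⟨x, h⟩, rfl⟩
      · exact ⟨Sum.inr ⟨x, h⟩, rfl⟩
  have toSum_bij' : Function.Bijective (Sum.elim Subtype.val Subtype.val :
      (↥S' ⊕ ↥T') → W) := by
    constructor
    · rintro (⟨a, ha⟩ | ⟨a, ha⟩) (⟨b, hb⟩ | ⟨b, hb⟩) h <;> simp at h <;> subst h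
      · rfl
      · exact (Finset.disjoint_left.mp hd' ha hb).elim
      · exact (Finset.disjoint_left.mp hd' hb ha).elim
      · rfl
    · intro x
      have : x ∈ S' ∪ T' := hW ▸ Finset.mem_univ x
      rcases Finset.mem_union.mp this with h | h
      · exact ⟨Sum.inl ⟨x, h⟩, rfl⟩
      · exact ⟨Sum.inr ⟨x, h⟩, rfl⟩
  let e1 : ↥S ≃ ↥S' := Finset.equivOfCardEq hS
  let e2 : ↥T ≃ ↥T' := Finset.equivOfCardEq hT
  let eV : V ≃ (↥S ⊕ ↥T) := (Equiv.ofBijective _ toSum_bij).symm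
  let eW : (↥S' ⊕ ↥T') ≃ W := Equiv.ofBijective _ toSum_bij'
  let e : V ≃ W := eV.trans ((Equiv.sumCongr e1 e2).trans eW)
  have hmem : ∀ v : V, (v ∈ S → e v ∈ S') ∧ (v ∈ T → e v ∈ T') := by
    intro v
    have hv : Sum.elim Subtype.val Subtype.val (eV v) = v :=
      (Equiv.ofBijective _ toSum_bij).apply_symm_apply v
    constructor
    · intro hvS
      rcases hsum : eV v with a | a
      · have : e v = (e1 a).val := by
          simp [e, eW, hsum, Equiv.ofBijective]
        rw [this]; exact (e1 a).2
      · rw [hsum] at hv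
        simp at hv
        rw [← hv] at hvS
        exact (Finset.disjoint_right.mp hd a.2 hvS).elim
    · intro hvT
      rcases hsum : eV v with a | a
      · rw [hsum] at hv
        simp at hv
        rw [← hv] at hvT
        exact (Finset.disjoint_left.mp hd a.2 hvT).elim
      · have : e v = (e2 a).val := by
          simp [e, eW, hsum, Equiv.ofBijective]
        rw [this]; exact (e2 a).2
  have hmemS : ∀ v : V, v ∈ S ↔ e v ∈ S' := by
    intro v
    constructor
    · exact (hmem v).1
    · intro h
      by_contra hvS
      have hvT : v ∈ T := by
        have : v ∈ S ∪ T := hV ▸ Finset.mem_univ v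
        rcases Finset.mem_union.mp this with h' | h'
        · exact absurd h' hvS
        · exact h'
      exact Finset.disjoint_left.mp hd' h ((hmem v).2 hvT)
  have hmemT : ∀ v : V, v ∈ T ↔ e v ∈ T' := by
    intro v
    constructor
    · exact (hmem v).2
    · intro h
      by_contra hvT
      have hvS : v ∈ S := by
        have : v ∈ S ∪ T := hV ▸ Finset.mem_univ v
        rcases Finset.mem_union.mp this with h' | h'
        · exact h'
        · exact absurd h' hvT
      exact Finset.disjoint_right.mp hd' h ((hmem v).1 hvS)
  exact ⟨⟨e, by
    intro x y
    show ((e x ∈ S' ∧ e y ∈ T') ∨ (e x ∈ T' ∧ e y ∈ S')) ↔ _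
    rw [← hmemS x, ← hmemT y, ← hmemT x, ← hmemS y]
    rfl⟩⟩

lemma adjMatrix_congr {G G' : SimpleGraph V} [DecidableRel G.Adj] [DecidableRel G'.Adj]
    (h : G = G') : G.adjMatrix ℝ = G'.adjMatrix ℝ := by
  subst h
  ext v w
  by_cases hvw : G.Adj v w <;> simp [hvw]

lemma adjMatrix_isHermitian (G : SimpleGraph V) [DecidableRel G.Adj] :
    (G.adjMatrix ℝ).IsHermitian := by
  show _ = _
  ext i j
  simp [Matrix.conjTranspose_apply, SimpleGraph.adj_comm]

lemma rootMult_poly (n : ℕ) (hn : 2 ≤ n) (r : ℝ) (hr : r ≠ 0) :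
    (X ^ n - C r * X ^ (n-2) : ℝ[X]).rootMultiplicity 0 = n - 2 := by
  have hfac : (X ^ n - C r * X ^ (n-2) : ℝ[X]) = X ^ (n-2) * (X^2 - C r) := by
    rw [mul_sub, ← pow_add, Nat.sub_add_cancel hn]
    ring
  have hne2 : (X^2 - C r : ℝ[X]) ≠ 0 := by
    intro h
    have := congrArg (Polynomial.eval 0) h
    simp at this
    exact hr this
  rw [hfac, Polynomial.rootMultiplicity_mul
    (mul_ne_zero (pow_ne_zero _ Polynomial.X_ne_zero) hne2)]
  rw [show (X:ℝ[X]) ^ (n-2) = (X - C 0)^(n-2) by simp,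
    Polynomial.rootMultiplicity_X_sub_C_pow,
    Polynomial.rootMultiplicity_eq_zero (by simp [Polynomial.IsRoot, hr] ), add_zero]

lemma coeff_extract (k m : ℕ) (hkm : k < m) (c1 c2 : ℝ)
    (h : (X^m - C c1 * X^k : ℝ[X]) = X^m - C c2 * X^k) : c1 = c2 := by
  have := congrArg (fun p => Polynomial.coeff p k) h
  simp only [Polynomial.coeff_sub, Polynomial.coeff_C_mul, Polynomial.coeff_X_pow] at this
  rw [if_neg (by omega)] at this
  simp at this
  linarith

end StarDS

open StarDS Matrix Finset in
/-- The star graph `K_{1,q}` (with `q ≥ 2`) is determined by its adjacency spectrum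
if and only if `q` is prime. -/
theorem starGraph_DS_iff_prime (q : ℕ) (hq : 2 ≤ q) :
    (∀ (V : Type) (_ : Fintype V) (_ : DecidableEq V) (H : SimpleGraph V)
      (_ : DecidableRel H.Adj),
      (H.adjMatrix ℝ).charpoly =
          ((completeBipartiteGraph (Fin 1) (Fin q)).adjMatrix ℝ).charpoly →
        Nonempty (H ≃g completeBipartiteGraph (Fin 1) (Fin q))) ↔ q.Prime := by
  have hcardsum : Fintype.card (Fin 1 ⊕ Fin q) = q + 1 := by simp [add_comm]
  have hchK : ((completeBipartiteGraph (Fin 1) (Fin q)).adjMatrix ℝ).charpoly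
      = X ^ (q+1) - C (q:ℝ) * X ^ (q-1) := by
    rw [adjMatrix_congr (completeBipartiteGraph_eq_patGraph (α := Fin 1) (β := Fin q)),
      patGraph_charpoly _ _ _ (by omega), hcardsum, sumLeft_card, sumRight_card]
    simp only [Fintype.card_fin, Nat.cast_one, one_mul]
    congr 1
  constructor
  · -- DS → prime
    intro hDS
    by_contra hnp
    obtain ⟨a, hadvd, ha2, haq⟩ := Nat.exists_dvd_of_not_prime2 hq hnp
    obtain ⟨b, hab⟩ := hadvd
    have hb2 : 2 ≤ b := by
      rcases b with _ | _ | b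
      · omega
      · omega
      · omega
    have hbq : b < q := by nlinarith
    have habq : a + b ≤ q := by nlinarith
    -- build the cospectral mate on the same vertex type
    obtain ⟨AB, hABsub, hABcard⟩ := Finset.exists_subset_card_eq
      (s := (univ : Finset (Fin 1 ⊕ Fin q))) (n := a + b)
      (by rw [Finset.card_univ, hcardsum]; omega)
    obtain ⟨B, hBsub, hBcard⟩ := Finset.exists_subset_card_eq
      (s := AB) (n := b) (by omega)
    have hdAB : Disjoint (AB \ B) B := Finset.sdiff_disjoint
    have hAcard : (AB \ B).card = a := by
      rw [Finset.card_sdiff_of_subset hBsub, hABcard, hBcard]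
      omega
    have hchH : ((patGraph (AB \ B) B hdAB).adjMatrix ℝ).charpoly
        = X ^ (q+1) - C (q:ℝ) * X ^ (q-1) := by
      rw [patGraph_charpoly _ _ _ (by omega), hcardsum, hAcard, hBcard]
      have : ((a:ℝ) * b) = q := by
        rw [← Nat.cast_mul, ← hab]
      rw [this]
      congr 1
    obtain ⟨φ⟩ := hDS (Fin 1 ⊕ Fin q) inferInstance inferInstance
      (patGraph (AB \ B) B hdAB) inferInstance (hchH.trans hchK.symm)
    -- degree contradiction
    have hKdeg : (completeBipartiteGraph (Fin 1) (Fin q)).degree (Sum.inl 0) = q := by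
      rw [← SimpleGraph.card_neighborFinset_eq_degree]
      have hnb : (completeBipartiteGraph (Fin 1) (Fin q)).neighborFinset (Sum.inl 0)
          = sumRight (Fin 1) (Fin q) := by
        ext x
        cases x <;> simp only [SimpleGraph.mem_neighborFinset] <;>
          simp [SimpleGraph.mem_neighborFinset, completeBipartiteGraph, sumRight]
      rw [hnb, sumRight_card, Fintype.card_fin]
    set w := φ.symm (Sum.inl 0) with hw
    have hdegw : (patGraph (AB \ B) B hdAB).degree w = q := by
      rw [iso_degree φ w, hw, RelIso.apply_symm_apply, hKdeg]
    by_cases hwA : w ∈ AB \ B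
    · rw [patGraph_degree_of_mem_S hwA, hBcard] at hdegw
      omega
    · by_cases hwB : w ∈ B
      · rw [patGraph_degree_of_mem_T hwB, hAcard] at hdegw
        omega
      · rw [patGraph_degree_of_not_mem hwA hwB] at hdegw
        omega
  · -- prime → DS
    intro hp V _ _ H _ hchar
    have hchH : (H.adjMatrix ℝ).charpoly = X ^ (q+1) - C (q:ℝ) * X ^ (q-1) :=
      hchar.trans hchK
    have hcardV : Fintype.card V = q + 1 := by
      rw [← Matrix.charpoly_natDegree_eq_dim (H.adjMatrix ℝ), hchar,
        Matrix.charpoly_natDegree_eq_dim, hcardsum]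
    have hrm : ((X ^ (q+1) - C (q:ℝ) * X ^ (q-1)) : ℝ[X]).rootMultiplicity 0 = q - 1 := by
      have h := rootMult_poly (q+1) (by omega) q (by positivity)
      rw [show q+1-2 = q-1 from by omega] at h
      exact h
    have hrank : (H.adjMatrix ℝ).rank = 2 := by
      rw [hermitian_rank_eq (adjMatrix_isHermitian H), hchH, hrm, hcardV]
      omega
    obtain ⟨S, T, hd, hSne, hTne, hHeq⟩ := rank_two_structure H hrank
    have hchH2 : ((patGraph S T hd).adjMatrix ℝ).charpoly
        = X ^ (q+1) - C (q:ℝ) * X ^ (q-1) := by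
      rw [← adjMatrix_congr hHeq, hchH]
    rw [patGraph_charpoly S T hd (by omega), hcardV] at hchH2
    have hST : (S.card : ℝ) * T.card = q := by
      refine coeff_extract (q+1-2) (q+1) (by omega) _ _ ?_
      exact hchH2
    have hSTnat : S.card * T.card = q := by
      exact_mod_cast hST
    have hdvd : S.card ∣ q := ⟨T.card, hSTnat.symm⟩
    have hScard_pos : 0 < S.card := Finset.card_pos.mpr hSne
    have hTcard_pos : 0 < T.card := Finset.card_pos.mpr hTne
    rcases (Nat.Prime.eq_one_or_self_of_dvd hp _ hdvd) with hS1 | hSq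
    · -- S.card = 1, T.card = q
      have hTq : T.card = q := by
        rw [hS1, one_mul] at hSTnat
        exact hSTnat
      have hunion : S ∪ T = univ := by
        apply Finset.eq_univ_of_card
        rw [Finset.card_union_of_disjoint hd, hS1, hTq, hcardV, add_comm]
      obtain ⟨ψ⟩ := patGraph_iso_of_cards S T hd
        (sumLeft (Fin 1) (Fin q)) (sumRight (Fin 1) (Fin q)) sum_disjoint
        (by rw [hS1, sumLeft_card, Fintype.card_fin])
        (by rw [hTq, sumRight_card, Fintype.card_fin])
        hunion sum_union
      rw [hHeq, completeBipartiteGraph_eq_patGraph]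
      exact ⟨ψ⟩
    · -- S.card = q, T.card = 1
      have hTq : T.card = 1 := by
        rw [hSq] at hSTnat
        have : q * T.card = q * 1 := by omega
        exact Nat.eq_of_mul_eq_mul_left (by omega) this
      have hunion : T ∪ S = univ := by
        apply Finset.eq_univ_of_card
        rw [Finset.card_union_of_disjoint hd.symm, hSq, hTq, hcardV, add_comm]
      obtain ⟨ψ⟩ := patGraph_iso_of_cards T S hd.symm
        (sumLeft (Fin 1) (Fin q)) (sumRight (Fin 1) (Fin q)) sum_disjoint
        (by rw [hTq, sumLeft_card, Fintype.card_fin])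
        (by rw [hSq, sumRight_card, Fintype.card_fin])
        hunion sum_union
      rw [hHeq, completeBipartiteGraph_eq_patGraph, ← patGraph_comm S T hd]
      exact ⟨ψ⟩
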